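/- Fix an odd integer β ≥ 3, integers D ≥ 1 and K ≥ 1, and a real v_max > 0, and let Δ = 2·v_max/(β^D − 1). If V_1, …, V_K are independent real random variables, each uniformly distributed on the interval [−v_max − Δ/2, v_max + Δ/2], then the mean squared averaged quantization error satisfies E[((1/K)·Σ_{k=1}^{K} (q(V_k) − V_k))²] = v_max²/(3·K·(β^D − 1)²). -/

import Mathlib

/-- Clamping of `v` to the interval `[-vmax, vmax]`. -/
noncomputable def clampR (vmax v : ℝ) : ℝ := max (-vmax) (min v vmax)

/-- The quantization index `n(v) = ⌊(ξ/v_max)·v' + ξ + 1/2⌋` where `ξ = (β^D − 1)/2` and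
`v'` is the clamped value of `v`. -/
noncomputable def qidx (β D : ℕ) (vmax v : ℝ) : ℤ :=
  ⌊(((β : ℝ) ^ D - 1) / 2 / vmax) * clampR vmax v + ((β : ℝ) ^ D - 1) / 2 + 1 / 2⌋

/-- The `i`th base-`β` digit `b_i(v) ∈ {0,…,β−1}` of the quantization index `n(v)`. -/
noncomputable def bdigit (β D : ℕ) (vmax v : ℝ) (i : ℕ) : ℕ :=
  (qidx β D vmax v).toNat / β ^ i % β

/-- The `i`th balanced numeral `x_i(v) = b_i(v) − (β−1)/2`. -/
noncomputable def numeral (β D : ℕ) (vmax v : ℝ) (i : ℕ) : ℤ :=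
  (bdigit β D vmax v i : ℤ) - ((β : ℤ) - 1) / 2

/-- The quantizer (decoder composed with encoder)
`q(v) = (v_max/ξ)·Σ_{i=0}^{D−1} x_i(v)·β^i` where `ξ = (β^D − 1)/2`. -/
noncomputable def quant (β D : ℕ) (vmax v : ℝ) : ℝ :=
  vmax / (((β : ℝ) ^ D - 1) / 2) *
    ∑ i ∈ Finset.range D, (numeral β D vmax v i : ℝ) * (β : ℝ) ^ i

lemma digit_sum_eq {β : ℕ} :
    ∀ (D n : ℕ), n < β ^ D → ∑ i ∈ Finset.range D, n / β ^ i % β * β ^ i = n := by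
  intro D
  induction D with
  | zero =>
    intro n hn
    rw [pow_zero, Nat.lt_one_iff] at hn
    simp [hn]
  | succ d ih =>
    intro n hn
    rw [Finset.sum_range_succ']
    have h1 : ∀ i, n / β ^ (i + 1) % β * β ^ (i + 1)
        = ((n / β) / β ^ i % β * β ^ i) * β := by
      intro i
      rw [pow_succ', Nat.div_div_eq_div_mul]
      ring
    simp only [h1]
    rw [← Finset.sum_mul, ih (n / β) (Nat.div_lt_of_lt_mul (by rwa [← pow_succ']))]
    simp only [pow_zero, Nat.div_one, mul_one]
    rw [mul_comm]
    exact Nat.div_add_mod n β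

section
variable {β D : ℕ} (hβ : 3 ≤ β) (hD : 1 ≤ D)

lemma one_lt_pow_real (hβ : 3 ≤ β) (hD : 1 ≤ D) : (1:ℝ) < (β:ℝ) ^ D := by
  have h3 : (3:ℝ) ≤ (β:ℝ) := by exact_mod_cast hβ
  exact one_lt_pow₀ (by linarith) (by omega)

lemma clampR_mem (vmax v : ℝ) (hv : 0 < vmax) :
    clampR vmax v ∈ Set.Icc (-vmax) vmax := by
  constructor
  · exact le_max_left _ _
  · exact max_le (by linarith) (min_le_right _ _)

lemma qidx_nonneg (vmax v : ℝ) (hβ : 3 ≤ β) (hD : 1 ≤ D) (hv : 0 < vmax) :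
    0 ≤ qidx β D vmax v := by
  have hpow := one_lt_pow_real hβ hD
  have hc := (clampR_mem vmax v hv).1
  have hξ : 0 < ((β:ℝ) ^ D - 1) / 2 := by linarith
  apply Int.le_floor.2
  push_cast
  have key : (((β:ℝ) ^ D - 1) / 2 / vmax) * (-vmax) = -(((β:ℝ) ^ D - 1) / 2) := by
    field_simp
  have h1 : (((β:ℝ) ^ D - 1) / 2 / vmax) * clampR vmax v
      ≥ (((β:ℝ) ^ D - 1) / 2 / vmax) * (-vmax) :=
    mul_le_mul_of_nonneg_left hc (le_of_lt (div_pos hξ hv))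
  rw [key] at h1
  linarith

lemma qidx_lt (vmax v : ℝ) (hβ : 3 ≤ β) (hD : 1 ≤ D) (hv : 0 < vmax) :
    qidx β D vmax v < (β : ℤ) ^ D := by
  have hpow := one_lt_pow_real hβ hD
  have hc := (clampR_mem vmax v hv).2
  have hξ : 0 < ((β:ℝ) ^ D - 1) / 2 := by linarith
  apply Int.floor_lt.2
  push_cast
  have h1 : (((β:ℝ) ^ D - 1) / 2 / vmax) * clampR vmax v
      ≤ (((β:ℝ) ^ D - 1) / 2 / vmax) * vmax := by
    apply mul_le_mul_of_nonneg_left hc (le_of_lt (div_pos hξ hv))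
  rw [div_mul_cancel₀ _ (ne_of_gt hv)] at h1
  linarith

lemma quant_eq (vmax v : ℝ) (hβ : 3 ≤ β) (hodd : Odd β) (hD : 1 ≤ D) (hv : 0 < vmax) :
    quant β D vmax v = 2 * vmax / ((β:ℝ) ^ D - 1) * (qidx β D vmax v : ℝ) - vmax := by
  have hpow := one_lt_pow_real hβ hD
  have hξ : ((β:ℝ) ^ D - 1) / 2 ≠ 0 := ne_of_gt (by linarith)
  set n : ℤ := qidx β D vmax v with hn
  have hn0 : 0 ≤ n := qidx_nonneg vmax v hβ hD hv
  have hnlt : n < (β : ℤ) ^ D := qidx_lt vmax v hβ hD hv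
  have hNlt : n.toNat < β ^ D := by
    have h2 : (n.toNat : ℤ) < (β:ℤ) ^ D := by rwa [Int.toNat_of_nonneg hn0]
    exact_mod_cast h2
  have hdig : ∑ i ∈ Finset.range D, bdigit β D vmax v i * β ^ i = n.toNat :=
    digit_sum_eq D n.toNat hNlt
  have hdigZ : ∑ i ∈ Finset.range D, (bdigit β D vmax v i : ℤ) * (β:ℤ) ^ i = n := by
    have : ((∑ i ∈ Finset.range D, bdigit β D vmax v i * β ^ i : ℕ) : ℤ) = n := by
      rw [hdig]; exact Int.toNat_of_nonneg hn0
    push_cast at this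
    exact this
  have hm : 2 * (((β:ℤ) - 1) / 2) = (β:ℤ) - 1 := by
    obtain ⟨t, ht⟩ := hodd
    subst ht
    push_cast
    omega
  have hgeom : ((β:ℤ) - 1) * ∑ i ∈ Finset.range D, (β:ℤ) ^ i = (β:ℤ) ^ D - 1 := by
    rw [mul_comm]
    exact geom_sum_mul _ _
  have hS : (2:ℤ) * ∑ i ∈ Finset.range D, numeral β D vmax v i * (β:ℤ) ^ i
      = 2 * n - ((β:ℤ) ^ D - 1) := by
    unfold numeral
    calc (2:ℤ) * ∑ i ∈ Finset.range D,
          ((bdigit β D vmax v i : ℤ) - ((β:ℤ) - 1) / 2) * (β:ℤ) ^ i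
        = 2 * ∑ i ∈ Finset.range D, (bdigit β D vmax v i : ℤ) * (β:ℤ) ^ i
          - (2 * (((β:ℤ) - 1) / 2)) * ∑ i ∈ Finset.range D, (β:ℤ) ^ i := by
          simp only [sub_mul, Finset.sum_sub_distrib, ← Finset.mul_sum]
          ring
      _ = 2 * n - ((β:ℤ) ^ D - 1) := by rw [hdigZ, hm, hgeom]
  have hSr : (∑ i ∈ Finset.range D, (numeral β D vmax v i : ℝ) * (β:ℝ) ^ i)
      = (n:ℝ) - ((β:ℝ) ^ D - 1) / 2 := by
    have h2 : (2:ℝ) * ∑ i ∈ Finset.range D, (numeral β D vmax v i : ℝ) * (β:ℝ) ^ i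
        = 2 * (n:ℝ) - ((β:ℝ) ^ D - 1) := by exact_mod_cast hS
    linarith
  have hne : (β:ℝ) ^ D - 1 ≠ 0 := by linarith
  unfold quant
  rw [hSr, div_div_eq_mul_div, mul_sub]
  have h2 : vmax * 2 / ((β:ℝ) ^ D - 1) * (((β:ℝ) ^ D - 1) / 2) = vmax := by
    field_simp
  rw [h2]
  ring

lemma qidx_eq_floor (vmax v : ℝ) (hβ : 3 ≤ β) (hD : 1 ≤ D) (hv : 0 < vmax)
    (hmem : v ∈ Set.Ico (-vmax - 2 * vmax / ((β:ℝ) ^ D - 1) / 2)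
      (vmax + 2 * vmax / ((β:ℝ) ^ D - 1) / 2)) :
    qidx β D vmax v
      = ⌊(((β : ℝ) ^ D - 1) / 2 / vmax) * v + ((β : ℝ) ^ D - 1) / 2 + 1 / 2⌋ := by
  have hpow := one_lt_pow_real hβ hD
  set X : ℝ := (β:ℝ) ^ D - 1 with hXdef
  have hX : 0 < X := by simp only [hXdef]; linarith
  set r : ℝ := X / 2 / vmax with hrdef
  have hr : 0 < r := div_pos (by linarith) hv
  have hrv : r * vmax = X / 2 := div_mul_cancel₀ _ (ne_of_gt hv)
  have hrd : r * (2 * vmax / X / 2) = 1 / 2 := by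
    simp only [hrdef]
    field_simp
  obtain ⟨hlo, hhi⟩ := hmem
  rcases le_or_gt v (-vmax) with h1 | h1
  · -- lower clamp region (or boundary)
    rcases eq_or_lt_of_le h1 with h1e | h1s
    · have hc : clampR vmax v = v := by
        unfold clampR
        rw [min_eq_left (by linarith), max_eq_right (by linarith)]
      unfold qidx
      rw [hc]
    · have hc : clampR vmax v = -vmax := by
        unfold clampR
        rw [min_eq_left (by linarith), max_eq_left (by linarith)]
      unfold qidx
      rw [hc]
      have hL : r * (-vmax) + X / 2 + 1 / 2 = 1 / 2 := by
        rw [mul_neg, hrv]; ring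
      rw [hL]
      have h0 : (0:ℝ) ≤ r * v + X / 2 + 1 / 2 := by
        have := mul_le_mul_of_nonneg_left hlo (le_of_lt hr)
        have h2 : r * (-vmax - 2 * vmax / X / 2) = -(X/2) - 1/2 := by
          rw [mul_sub, mul_neg, hrv, hrd]
        rw [h2] at this
        linarith
      have h2 : r * v + X / 2 + 1 / 2 < 1 := by
        have := mul_lt_mul_of_pos_left h1s hr
        rw [mul_neg, hrv] at this
        linarith
      rw [show (⌊(1:ℝ)/2⌋ : ℤ) = 0 by norm_num,
        Int.floor_eq_zero_iff.2 ⟨h0, h2⟩]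
  · rcases le_or_gt v vmax with h2 | h2
    · have hc : clampR vmax v = v := by
        unfold clampR
        rw [min_eq_left (by linarith), max_eq_right (by linarith)]
      unfold qidx
      rw [hc]
    · have hc : clampR vmax v = vmax := by
        unfold clampR
        rw [min_eq_right (by linarith), max_eq_right (by linarith)]
      unfold qidx
      rw [hc]
      have hNcast : (((β:ℤ) ^ D - 1 : ℤ) : ℝ) = X := by push_cast; rfl
      have hL : r * vmax + X / 2 + 1 / 2 = X + 1 / 2 := by rw [hrv]; ring
      rw [hL]
      have e1 : ⌊X + 1/2⌋ = (β:ℤ) ^ D - 1 := by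
        apply Int.floor_eq_iff.2
        constructor
        · rw [hNcast]; norm_num
        · rw [hNcast]; push_cast; norm_num
      rw [e1]
      symm
      apply Int.floor_eq_iff.2
      constructor
      · rw [hNcast]
        have := mul_lt_mul_of_pos_left h2 hr
        rw [hrv] at this
        linarith
      · push_cast
        have := mul_lt_mul_of_pos_left hhi hr
        rw [mul_add, hrv, hrd] at this
        simp only [hXdef] at *
        linarith

lemma quant_sub_eq (vmax v : ℝ) (hβ : 3 ≤ β) (hodd : Odd β) (hD : 1 ≤ D) (hv : 0 < vmax)
    (hmem : v ∈ Set.Ico (-vmax - 2 * vmax / ((β:ℝ) ^ D - 1) / 2)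
      (vmax + 2 * vmax / ((β:ℝ) ^ D - 1) / 2)) :
    quant β D vmax v - v = (2 * vmax / ((β:ℝ) ^ D - 1)) *
      (1 / 2 - Int.fract ((((β : ℝ) ^ D - 1) / 2 / vmax) * v + ((β : ℝ) ^ D - 1) / 2 + 1 / 2)) := by
  have hpow := one_lt_pow_real hβ hD
  have hXne : (β:ℝ) ^ D - 1 ≠ 0 := by linarith
  have hvne : vmax ≠ 0 := ne_of_gt hv
  rw [quant_eq vmax v hβ hodd hD hv, qidx_eq_floor vmax v hβ hD hv hmem, Int.fract]
  set F : ℝ := (⌊(((β : ℝ) ^ D - 1) / 2 / vmax) * v + ((β : ℝ) ^ D - 1) / 2 + 1 / 2⌋ : ℝ)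
  field_simp
  ring

end


open MeasureTheory intervalIntegral

lemma periodic_fract_poly (p : ℕ) :
    Function.Periodic (fun t : ℝ => (1 / 2 - Int.fract t) ^ p) 1 := by
  intro x
  simp [Int.fract_add_one]

lemma intervalIntegrable_fract_poly (p : ℕ) (a b : ℝ) :
    IntervalIntegrable (fun t : ℝ => (1 / 2 - Int.fract t) ^ p) volume a b := by
  rw [intervalIntegrable_iff]
  apply Measure.integrableOn_of_bounded (M := 1)
  · exact (measure_Ioc_lt_top).ne
  · exact ((measurable_const.sub measurable_fract).pow_const p).aestronglyMeasurable
  · apply ae_of_all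
    intro x
    have h0 := Int.fract_nonneg x
    have h1 := Int.fract_lt_one x
    rw [Real.norm_eq_abs, abs_pow]
    calc |1 / 2 - Int.fract x| ^ p ≤ 1 ^ p := by
          apply pow_le_pow_left₀ (abs_nonneg _)
          rw [abs_le]
          constructor <;> linarith
      _ = 1 := one_pow p

lemma integral_fract_poly_one (p : ℕ) :
    ∫ t in (0:ℝ)..1, (1 / 2 - Int.fract t) ^ p = ∫ t in (0:ℝ)..1, (1 / 2 - t) ^ p := by
  apply intervalIntegral.integral_congr_ae
  have h1 : ∀ᵐ x : ℝ, x ≠ (1:ℝ) := by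
    rw [ae_iff]
    have h2 : {x : ℝ | ¬ x ≠ 1} = {1} := by ext x; simp
    rw [h2, Real.volume_singleton]
  filter_upwards [h1] with x hx hmem
  rw [Set.uIoc_of_le (by norm_num : (0:ℝ) ≤ 1)] at hmem
  rw [Int.fract_eq_self.2 ⟨hmem.1.le, lt_of_le_of_ne hmem.2 hx⟩]

lemma integral_fract_poly (p : ℕ) (N : ℕ) :
    ∫ t in (0:ℝ)..(N:ℝ), (1 / 2 - Int.fract t) ^ p
      = (N : ℝ) * ∫ t in (0:ℝ)..1, (1 / 2 - t) ^ p := by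
  have key := (periodic_fract_poly p).intervalIntegral_add_zsmul_eq (N : ℤ) 0
    (fun t₁ t₂ => intervalIntegrable_fract_poly p t₁ t₂)
  simp only [zero_add, smul_eq_mul, mul_one, zsmul_eq_mul, Int.cast_natCast] at key
  rw [key, integral_fract_poly_one]

lemma integral_half_sub_sq : ∫ t in (0:ℝ)..1, (1 / 2 - t) ^ 2 = 1 / 12 := by
  have h : (fun t : ℝ => (1 / 2 - t) ^ 2) = fun t : ℝ => t ^ 2 - t + 1 / 4 := by
    funext t; ring
  rw [h, integral_add (f := fun t : ℝ => t ^ 2 - t) (((continuous_pow 2).sub continuous_id').intervalIntegrable _ _)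
      intervalIntegrable_const,
    integral_sub ((continuous_pow 2).intervalIntegrable _ _) intervalIntegrable_id,
    integral_pow, integral_id, intervalIntegral.integral_const]
  norm_num

lemma integral_half_sub : ∫ t in (0:ℝ)..1, (1 / 2 - t) ^ 1 = 0 := by
  simp only [pow_one]
  rw [integral_sub intervalIntegrable_const intervalIntegrable_id, integral_id, intervalIntegral.integral_const]
  norm_num

section IntLemmas
open intervalIntegral
variable {β D : ℕ}

lemma err_setIntegral (vmax : ℝ) (hβ : 3 ≤ β) (hodd : Odd β) (hD : 1 ≤ D) (hv : 0 < vmax)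
    (p : ℕ) :
    ∫ v in Set.Icc (-vmax - 2 * vmax / ((β:ℝ) ^ D - 1) / 2)
        (vmax + 2 * vmax / ((β:ℝ) ^ D - 1) / 2), (quant β D vmax v - v) ^ p
      = (2 * vmax / ((β:ℝ) ^ D - 1)) ^ (p + 1) * (β:ℝ) ^ D *
        ∫ t in (0:ℝ)..1, (1 / 2 - t) ^ p := by
  have hpow := one_lt_pow_real hβ hD
  set X : ℝ := (β:ℝ) ^ D - 1 with hXdef
  have hX : 0 < X := by simp only [hXdef]; linarith
  set Δ : ℝ := 2 * vmax / X with hΔdef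
  have hΔ : 0 < Δ := by positivity
  set a : ℝ := -vmax - Δ / 2 with hadef
  set b : ℝ := vmax + Δ / 2 with hbdef
  have hab : a ≤ b := by simp only [hadef, hbdef]; linarith
  set r : ℝ := X / 2 / vmax with hrdef
  have hr : 0 < r := by positivity
  have hrΔ : r = Δ⁻¹ := by
    simp only [hrdef, hΔdef]
    field_simp
  rw [MeasureTheory.integral_Icc_eq_integral_Ioc]
  have hcongr : ∫ v in Set.Ioc a b, (quant β D vmax v - v) ^ p
      = ∫ v in Set.Ioc a b, (Δ * (1 / 2 - Int.fract (r * v + X / 2 + 1 / 2))) ^ p := by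
    apply MeasureTheory.setIntegral_congr_ae measurableSet_Ioc
    have h1 : ∀ᵐ x : ℝ, x ≠ b := by
      rw [MeasureTheory.ae_iff]
      have h2 : {x : ℝ | ¬ x ≠ b} = {b} := by ext x; simp
      rw [h2, Real.volume_singleton]
    filter_upwards [h1] with x hx hmem
    rw [quant_sub_eq vmax x hβ hodd hD hv ⟨hmem.1.le, lt_of_le_of_ne hmem.2 hx⟩]
  rw [hcongr, ← intervalIntegral.integral_of_le hab]
  have hfun : (fun v => (Δ * (1 / 2 - Int.fract (r * v + X / 2 + 1 / 2))) ^ p)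
      = fun v => Δ ^ p * ((1 / 2 - Int.fract (r * v + (X / 2 + 1 / 2))) ^ p) := by
    funext v
    rw [mul_pow, add_assoc]
  rw [hfun, intervalIntegral.integral_const_mul,
    intervalIntegral.integral_comp_mul_add
      (f := fun t => (1 / 2 - Int.fract t) ^ p) (ne_of_gt hr) (X / 2 + 1 / 2)]
  have hea : r * a + (X / 2 + 1 / 2) = 0 := by
    simp only [hadef, hrdef, hΔdef]
    field_simp
    ring
  have heb : r * b + (X / 2 + 1 / 2) = ((β ^ D : ℕ) : ℝ) := by
    push_cast
    simp only [hbdef, hrdef, hΔdef, hXdef]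
    field_simp [show (β:ℝ) ^ D - 1 ≠ 0 by linarith]
    ring
  rw [hea, heb, smul_eq_mul, integral_fract_poly]
  push_cast
  rw [hrΔ, inv_inv]
  ring

end IntLemmas

lemma err_measurable (β D : ℕ) (vmax : ℝ) :
    Measurable (fun v => quant β D vmax v - v) := by
  have hq : Measurable (qidx β D vmax) := by
    unfold qidx clampR
    exact (((measurable_const.mul
      (measurable_const.max (measurable_id.min measurable_const))).add
        measurable_const).add measurable_const).floor
  have hnum : ∀ i, Measurable fun v => ((numeral β D vmax v i : ℤ) : ℝ) := by
    intro i
    exact Measurable.comp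
      (g := fun n : ℤ => (((((n.toNat / β ^ i % β : ℕ) : ℤ) - ((β:ℤ) - 1) / 2 : ℤ)) : ℝ))
      measurable_from_top hq
  have hquant : Measurable (quant β D vmax) := by
    unfold quant
    exact measurable_const.mul
      (Finset.measurable_sum _ (fun i _ => (hnum i).mul_const _))
  exact hquant.sub measurable_id

section MomLemmas
open intervalIntegral MeasureTheory
variable {β D : ℕ}

lemma err_moment (vmax : ℝ) (hβ : 3 ≤ β) (hodd : Odd β) (hD : 1 ≤ D) (hv : 0 < vmax) (p : ℕ) :
    ∫ v, (quant β D vmax v - v) ^ p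
        ∂((volume (Set.Icc (-vmax - 2 * vmax / ((β:ℝ) ^ D - 1) / 2)
            (vmax + 2 * vmax / ((β:ℝ) ^ D - 1) / 2)))⁻¹ •
          volume.restrict (Set.Icc (-vmax - 2 * vmax / ((β:ℝ) ^ D - 1) / 2)
            (vmax + 2 * vmax / ((β:ℝ) ^ D - 1) / 2)))
      = (2 * vmax / ((β:ℝ) ^ D - 1)) ^ p * ∫ t in (0:ℝ)..1, (1 / 2 - t) ^ p := by
  have hpow := one_lt_pow_real hβ hD
  have hX : 0 < (β:ℝ) ^ D - 1 := by linarith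
  have hΔ : 0 < 2 * vmax / ((β:ℝ) ^ D - 1) := by positivity
  have hβD : (0:ℝ) < (β:ℝ) ^ D := by positivity
  rw [MeasureTheory.integral_smul_measure]
  have hlen : (vmax + 2 * vmax / ((β:ℝ) ^ D - 1) / 2) -
      (-vmax - 2 * vmax / ((β:ℝ) ^ D - 1) / 2)
      = (2 * vmax / ((β:ℝ) ^ D - 1)) * (β:ℝ) ^ D := by
    field_simp
    ring
  rw [Real.volume_Icc, hlen, smul_eq_mul, ← ENNReal.ofReal_inv_of_pos (by positivity),
    ENNReal.toReal_ofReal (by positivity)]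
  have hset := err_setIntegral vmax hβ hodd hD hv p
  rw [hset, mul_inv]
  rw [pow_succ]
  field_simp

end MomLemmas

open MeasureTheory ProbabilityTheory in
/-- For an odd integer `β ≥ 3`, `D ≥ 1`, `K ≥ 1`, `v_max > 0` and `Δ = 2·v_max/(β^D − 1)`:
if `V_1,…,V_K` are independent, each uniformly distributed on
`[−v_max − Δ/2, v_max + Δ/2]`, then the mean squared averaged quantization error satisfies
`E[((1/K)·Σ_k (q(V_k) − V_k))²] = v_max²/(3·K·(β^D − 1)²)`. -/
theorem averaged_quant_error_second_moment {Ω : Type*} [MeasurableSpace Ω]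
    (P : Measure Ω) [IsProbabilityMeasure P]
    (β D K : ℕ) (hβ : 3 ≤ β) (hodd : Odd β) (hD : 1 ≤ D) (hK : 1 ≤ K)
    (vmax : ℝ) (hv : 0 < vmax)
    (V : Fin K → Ω → ℝ) (hVmeas : ∀ k, Measurable (V k))
    (hindep : iIndepFun V P)
    (hlaw : ∀ k, Measure.map (V k) P =
      (volume (Set.Icc (-vmax - 2 * vmax / ((β : ℝ) ^ D - 1) / 2)
          (vmax + 2 * vmax / ((β : ℝ) ^ D - 1) / 2)))⁻¹ •
        volume.restrict (Set.Icc (-vmax - 2 * vmax / ((β : ℝ) ^ D - 1) / 2)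
          (vmax + 2 * vmax / ((β : ℝ) ^ D - 1) / 2))) :
    ∫ ω, (1 / (K : ℝ) * ∑ k : Fin K, (quant β D vmax (V k ω) - V k ω)) ^ 2 ∂P
      = vmax ^ 2 / (3 * (K : ℝ) * ((β : ℝ) ^ D - 1) ^ 2) := by
  classical
  have hpow := one_lt_pow_real hβ hD
  have hX : 0 < (β:ℝ) ^ D - 1 := by linarith
  set Δ : ℝ := 2 * vmax / ((β:ℝ) ^ D - 1) with hΔdef
  have hΔ : 0 < Δ := by positivity
  set a : ℝ := -vmax - Δ / 2 with hadef
  set b : ℝ := vmax + Δ / 2 with hbdef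
  have hab : a ≤ b := by rw [hadef, hbdef]; linarith
  set μ : Measure ℝ := (volume (Set.Icc a b))⁻¹ • volume.restrict (Set.Icc a b) with hμdef
  have he : Measurable (fun v => quant β D vmax v - v) := err_measurable β D vmax
  set Y : Fin K → Ω → ℝ := fun k ω => quant β D vmax (V k ω) - V k ω with hYdef
  have hYmeas : ∀ k, Measurable (Y k) := fun k => he.comp (hVmeas k)
  -- moments of the error under μ
  have m1 : ∫ v, (quant β D vmax v - v) ∂μ = 0 := by
    have h := err_moment vmax hβ hodd hD hv 1
    rw [integral_half_sub, mul_zero] at h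
    simpa [pow_one, hμdef, hadef, hbdef, hΔdef] using h
  have m2 : ∫ v, (quant β D vmax v - v) ^ 2 ∂μ = Δ ^ 2 * (1 / 12) := by
    have h := err_moment vmax hβ hodd hD hv 2
    rw [integral_half_sub_sq] at h
    simpa [hμdef, hadef, hbdef, hΔdef] using h
  -- moments of Y k
  have hY1 : ∀ k, ∫ ω, Y k ω ∂P = 0 := by
    intro k
    calc ∫ ω, Y k ω ∂P = ∫ v, (quant β D vmax v - v) ∂μ := by
          rw [← hlaw k]
          exact (MeasureTheory.integral_map (hVmeas k).aemeasurable
            he.aestronglyMeasurable).symm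
      _ = 0 := m1
  have hY2 : ∀ k, ∫ ω, (Y k ω) ^ 2 ∂P = Δ ^ 2 * (1 / 12) := by
    intro k
    calc ∫ ω, (Y k ω) ^ 2 ∂P = ∫ v, (quant β D vmax v - v) ^ 2 ∂μ := by
          rw [← hlaw k]
          exact (MeasureTheory.integral_map (hVmeas k).aemeasurable
            ((he.pow_const 2).aestronglyMeasurable)).symm
      _ = Δ ^ 2 * (1 / 12) := m2
  -- a.e. membership and boundedness
  have hmem_ae : ∀ k, ∀ᵐ ω ∂P, V k ω ∈ Set.Ico a b := by
    intro k
    have hms : MeasurableSet (Set.Ico a b)ᶜ := measurableSet_Ico.compl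
    have h0 : Measure.map (V k) P (Set.Ico a b)ᶜ = 0 := by
      rw [hlaw k, Measure.smul_apply, Measure.restrict_apply hms]
      have hset : (Set.Ico a b)ᶜ ∩ Set.Icc a b = {b} := by
        ext x
        simp only [Set.mem_compl_iff, Set.mem_Ico, Set.mem_inter_iff, Set.mem_Icc,
          Set.mem_singleton_iff, not_and, not_lt]
        constructor
        · rintro ⟨h1, h2, h3⟩
          exact le_antisymm h3 (h1 h2)
        · rintro rfl
          exact ⟨fun _ => le_refl b, hab, le_refl b⟩
      rw [hset, Real.volume_singleton, smul_zero]
    have h1 : P (V k ⁻¹' (Set.Ico a b)ᶜ) = 0 := by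
      rw [← Measure.map_apply (hVmeas k) hms]
      exact h0
    rw [MeasureTheory.ae_iff]
    exact h1
  have hbd : ∀ k, ∀ᵐ ω ∂P, ‖Y k ω‖ ≤ Δ := by
    intro k
    filter_upwards [hmem_ae k] with ω hω
    have heq := quant_sub_eq vmax (V k ω) hβ hodd hD hv hω
    have h0 := Int.fract_nonneg ((((β : ℝ) ^ D - 1) / 2 / vmax) * (V k ω)
      + ((β : ℝ) ^ D - 1) / 2 + 1 / 2)
    have h1 := Int.fract_lt_one ((((β : ℝ) ^ D - 1) / 2 / vmax) * (V k ω)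
      + ((β : ℝ) ^ D - 1) / 2 + 1 / 2)
    have hy : Y k ω = quant β D vmax (V k ω) - V k ω := rfl
    rw [hy, heq, Real.norm_eq_abs, abs_mul, abs_of_pos (by rw [← hΔdef]; exact hΔ)]
    rw [← hΔdef]
    have : |1 / 2 - Int.fract ((((β : ℝ) ^ D - 1) / 2 / vmax) * (V k ω)
        + ((β : ℝ) ^ D - 1) / 2 + 1 / 2)| ≤ 1 := by
      rw [abs_le]
      constructor <;> linarith
    nlinarith
  have hmem2 : ∀ k, MeasureTheory.MemLp (Y k) 2 P := fun k =>
    MeasureTheory.MemLp.of_bound (hYmeas k).aestronglyMeasurable Δ (hbd k)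
  have hint : ∀ k, MeasureTheory.Integrable (Y k) P := fun k =>
    (hmem2 k).integrable one_le_two
  -- independence of the errors
  have hindep' : iIndepFun Y P :=
    hindep.comp (fun _ v => quant β D vmax v - v) (fun _ => he)
  -- variance computations
  have hvark : ∀ k, variance (Y k) P = Δ ^ 2 * (1 / 12) := by
    intro k
    rw [variance_eq_sub (hmem2 k)]
    simp only [Pi.pow_apply]
    rw [hY2 k, hY1 k]
    ring
  have hmemS : MeasureTheory.MemLp (∑ k, Y k) 2 P :=
    MeasureTheory.memLp_finsetSum' _ (fun k _ => hmem2 k)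
  have hvarS : variance (∑ k, Y k) P = (K : ℝ) * (Δ ^ 2 * (1 / 12)) := by
    rw [IndepFun.variance_sum (fun k _ => hmem2 k)
      (fun i _ j _ hij => hindep'.indepFun hij)]
    simp only [hvark]
    rw [Finset.sum_const, Finset.card_univ, Fintype.card_fin, nsmul_eq_mul]
  have hES : ∫ ω, (∑ k, Y k) ω ∂P = 0 := by
    simp only [Finset.sum_apply]
    rw [MeasureTheory.integral_finset_sum _ (fun k _ => hint k)]
    simp only [hY1, Finset.sum_const_zero]
  have hES2 : ∫ ω, ((∑ k, Y k) ω) ^ 2 ∂P = (K : ℝ) * (Δ ^ 2 * (1 / 12)) := by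
    have hv' := variance_eq_sub hmemS
    rw [hES] at hv'
    simp only [Pi.pow_apply] at hv'
    rw [hvarS] at hv'
    linarith [hv']
  -- final assembly
  have hstep : ∫ ω, (1 / (K : ℝ) * ∑ k : Fin K, (quant β D vmax (V k ω) - V k ω)) ^ 2 ∂P
      = (1 / (K : ℝ)) ^ 2 * ∫ ω, ((∑ k, Y k) ω) ^ 2 ∂P := by
    rw [← MeasureTheory.integral_const_mul]
    congr 1
    funext ω
    rw [mul_pow]
    congr 2
    simp only [Finset.sum_apply]
    rfl
  rw [hstep, hES2]
  have hK : (0:ℝ) < (K : ℝ) := by exact_mod_cast hK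
  rw [hΔdef]
  field_simp
  ring
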